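/- Let G be a torsion-free abelian group satisfying conditions K₂(a) and K₂(b) for distinct primes p₁, p₃, p₄, and let (H_i)_{i∈I} be a nonempty family of pure subgroups of G, each satisfying K₂(a) and K₂(b). Then H := ⋂_{i∈I} H_i also satisfies K₂(a) and K₂(b). (For K₂(b): given g ∈ p₁^ω H, fix i₀ and a witness k, z with z ∈ p₃^ω H_{i₀} and k·g + z ∈ p₄^ω H_{i₀}; then z lies in every H_j by uniqueness in G, so the witness works in H.) -/
import Mathlib


/-- `g` is divisible by all powers of `p` inside the group `G`. -/
def DivSet (p : ℕ) (G : Type*) [AddCommGroup G] : Set G :=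
  {g | ∀ n : ℕ, ∃ y : G, p ^ n • y = g}

/-- `p^ω H`, computed inside the subgroup `H` of `G`. -/
def DivIn {G : Type*} [AddCommGroup G] (p : ℕ) (H : AddSubgroup G) : Set G :=
  {g | g ∈ H ∧ ∀ n : ℕ, ∃ y ∈ H, p ^ n • y = g}

/-- `H` is a pure subgroup of `G`: `nH = H ∩ nG` for all integers `n`. -/
def IsPure {G : Type*} [AddCommGroup G] (H : AddSubgroup G) : Prop :=
  ∀ (n : ℤ) (x : G), x ∈ H → (∃ g : G, n • g = x) → ∃ y ∈ H, n • y = x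

/-- Condition K₁: `G = p₁^ω G` and `p^ω G = 0` for all primes `p ≠ p₁`. -/
def K1 (p1 : ℕ) (G : Type*) [AddCommGroup G] : Prop :=
  (∀ g : G, g ∈ DivSet p1 G) ∧
  (∀ p : ℕ, p.Prime → p ≠ p1 → DivSet p G = {0})

/-- Conditions K₂(a) and K₂(b). -/
def K2 (p1 p3 p4 : ℕ) (G : Type*) [AddCommGroup G] : Prop :=
  (∀ g ∈ DivSet p1 G, ∀ z1 ∈ DivSet p3 G, ∀ z2 ∈ DivSet p3 G,
      g + z1 ∈ DivSet p4 G → g + z2 ∈ DivSet p4 G → z1 = z2) ∧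
  (∀ g ∈ DivSet p1 G, ∃ k : ℕ, 0 < k ∧ ∃ z ∈ DivSet p3 G, k • g + z ∈ DivSet p4 G)

/-- Conditions K₂(a) and K₂(b), relativized to a subgroup `H` of `G`. -/
def K2In (p1 p3 p4 : ℕ) {G : Type*} [AddCommGroup G] (H : AddSubgroup G) : Prop :=
  (∀ g ∈ DivIn p1 H, ∀ z1 ∈ DivIn p3 H, ∀ z2 ∈ DivIn p3 H,
      g + z1 ∈ DivIn p4 H → g + z2 ∈ DivIn p4 H → z1 = z2) ∧
  (∀ g ∈ DivIn p1 H, ∃ k : ℕ, 0 < k ∧ ∃ z ∈ DivIn p3 H, k • g + z ∈ DivIn p4 H)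

section Aux

variable {G : Type*} [AddCommGroup G]

lemma nsmul_cancel [NoZeroSMulDivisors ℤ G] {m : ℕ} (hm : m ≠ 0) {a b : G}
    (h : m • a = m • b) : a = b := by
  have : (m : ℤ) • a = (m : ℤ) • b := by
    rw [natCast_zsmul, natCast_zsmul]; exact h
  exact smul_right_injective G (by exact_mod_cast hm) this

lemma divSet_smul {p k : ℕ} {z : G} (hz : z ∈ DivSet p G) : k • z ∈ DivSet p G := by
  intro n
  obtain ⟨y, hy⟩ := hz n
  exact ⟨k • y, by rw [smul_comm, hy]⟩

lemma divIn_to_divSet {p : ℕ} {H : AddSubgroup G} {x : G} (hx : x ∈ DivIn p H) :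
    x ∈ DivSet p G := fun n => (hx.2 n).imp fun y hy => hy.2

lemma pure_witness [NoZeroSMulDivisors ℤ G] {H : AddSubgroup G} (hH : IsPure H)
    {m : ℕ} (hm : m ≠ 0) {x y : G} (hx : x ∈ H) (hy : m • y = x) : y ∈ H := by
  obtain ⟨y', hy', h⟩ := hH (m : ℤ) x hx ⟨y, by rw [natCast_zsmul]; exact hy⟩
  rw [natCast_zsmul] at h
  have : y' = y := nsmul_cancel hm (h.trans hy.symm)
  exact this ▸ hy'

lemma mem_divIn_iInf [NoZeroSMulDivisors ℤ G] {p : ℕ} (hp : p ≠ 0)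
    {I : Type*} {H : I → AddSubgroup G} (hpure : ∀ i, IsPure (H i)) {x : G}
    (hx : ∀ i, x ∈ H i) (hx' : x ∈ DivSet p G) : x ∈ DivIn p (⨅ i, H i) := by
  refine ⟨AddSubgroup.mem_iInf.mpr hx, fun n => ?_⟩
  obtain ⟨y, hy⟩ := hx' n
  refine ⟨y, AddSubgroup.mem_iInf.mpr fun i => ?_, hy⟩
  exact pure_witness (hpure i) (pow_ne_zero n hp) (hx i) hy

end Aux

theorem stmt19 {G : Type*} [AddCommGroup G] [NoZeroSMulDivisors ℤ G]
    (p1 p3 p4 : ℕ) (hp1 : p1.Prime) (hp3 : p3.Prime) (hp4 : p4.Prime)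
    (h13 : p1 ≠ p3) (h14 : p1 ≠ p4) (h34 : p3 ≠ p4)
    (hG : K2 p1 p3 p4 G)
    {I : Type*} [Nonempty I] (H : I → AddSubgroup G)
    (hpure : ∀ i, IsPure (H i))
    (hHi : ∀ i, K2In p1 p3 p4 (H i)) :
    K2In p1 p3 p4 (⨅ i, H i) := by
  constructor
  · intro g hg z1 hz1 z2 hz2 h1 h2
    exact hG.1 g (divIn_to_divSet hg) z1 (divIn_to_divSet hz1) z2 (divIn_to_divSet hz2)
      (divIn_to_divSet h1) (divIn_to_divSet h2)
  · intro g hg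
    have hgI : ∀ i, g ∈ DivIn p1 (H i) := fun i =>
      ⟨AddSubgroup.mem_iInf.mp hg.1 i, fun n =>
        let ⟨y, hy, h⟩ := hg.2 n
        ⟨y, AddSubgroup.mem_iInf.mp hy i, h⟩⟩
    obtain ⟨i0⟩ := ‹Nonempty I›
    obtain ⟨k, hk, z, hz, hkz⟩ := (hHi i0).2 g (hgI i0)
    have hzH : ∀ j, z ∈ H j := by
      intro j
      obtain ⟨k', hk', z', hz', hkz'⟩ := (hHi j).2 g (hgI j)
      have key : k' • z = k • z' := by
        apply hG.1 ((k' * k) • g) (divSet_smul (divIn_to_divSet hg))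
          (k' • z) (divSet_smul (divIn_to_divSet hz))
          (k • z') (divSet_smul (divIn_to_divSet hz'))
        · have : (k' * k) • g + k' • z = k' • (k • g + z) := by
            rw [smul_add, smul_smul]
          rw [this]
          exact divSet_smul (divIn_to_divSet hkz)
        · have : (k' * k) • g + k • z' = k • (k' • g + z') := by
            rw [smul_add, smul_smul, mul_comm]
          rw [this]
          exact divSet_smul (divIn_to_divSet hkz')
      have hmem : k' • z ∈ H j := key ▸ AddSubgroup.nsmul_mem (H j) hz'.1 k
      exact pure_witness (hpure j) hk'.ne' hmem rfl
    refine ⟨k, hk, z, ?_, ?_⟩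
    · exact mem_divIn_iInf hp3.ne_zero hpure hzH (divIn_to_divSet hz)
    · refine mem_divIn_iInf hp4.ne_zero hpure (fun j => ?_) (divIn_to_divSet hkz)
      exact (H j).add_mem ((H j).nsmul_mem (AddSubgroup.mem_iInf.mp hg.1 j) k) (hzH j)
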